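/- In the weighted graph G_{a,b}, if the sets a and b are not disjoint (i.e., there exists an index i with a(i) = b(i) = 1), then the weighted distance between l_ν and r_μ is at least 2 + 1/p, where ν = i mod k and μ = k + ⌊i/k⌋; consequently the weighted diameter of G_{a,b} equals 2 + 1/p. -/

import Mathlib

open scoped ENNReal Classical

/-- Weight of a path given as a list of vertices. -/
noncomputable def pathWeight {V : Type*} (w : V → V → ℝ≥0∞) : List V → ℝ≥0∞
  | [] => 0
  | [_] => 0
  | x :: y :: rest => w x y + pathWeight w (y :: rest)

/-- Weighted shortest-path distance. -/
noncomputable def wdist {V : Type*} (w : V → V → ℝ≥0∞) (u v : V) : ℝ≥0∞ :=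
  sInf {c | ∃ l : List V, l.head? = some u ∧ l.getLast? = some v ∧ pathWeight w l = c}

/-- Weighted diameter. -/
noncomputable def wdiam {V : Type*} (w : V → V → ℝ≥0∞) : ℝ≥0∞ :=
  ⨆ u, ⨆ v, wdist w u v

/-- Vertices of the lower-bound graph `G_{a,b}`: centers `cL`, `cR` and
nodes `l_1, …, l_{2k-1}` and `r_1, …, r_{2k-1}` (index `i : Fin (2k-1)`
represents the node with label `i+1`). -/
inductive GV (k : ℕ) where
  | cL : GV k
  | cR : GV k
  | left : Fin (2 * k - 1) → GV k
  | right : Fin (2 * k - 1) → GV k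

/-- `i` and `j` lie both in `{1,…,k-1}` (upper part) or both in `{k,…,2k-1}` (lower part). -/
def sameSide (k : ℕ) (i j : Fin (2 * k - 1)) : Prop :=
  (i.1 + 1 < k ∧ j.1 + 1 < k) ∨ (k ≤ i.1 + 1 ∧ k ≤ j.1 + 1)

/-- The input-dependent edge between nodes `i+1` and `j+1` given by bit string `a`:
index `m` is mapped to the pair `(m % k, k + m / k)`, and the edge is present iff `a m = 0`. -/
def inputEdge (k : ℕ) (a : ℕ → Bool) (i j : Fin (2 * k - 1)) : Prop :=
  ∃ m : ℕ, m < k * k ∧ a m = false ∧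
    ((i.1 + 1 = m % k ∧ j.1 + 1 = k + m / k) ∨ (j.1 + 1 = m % k ∧ i.1 + 1 = k + m / k))

/-- Edge weights of `G_{a,b}`: weight `1/p` on `(cL, cR)` and on the cut edges `(l_v, r_v)`;
weight `1` from `cL` to all left nodes, from `cR` to all right nodes, inside the cliques
on `L₁, L₂, R₁, R₂` and on input-dependent edges; `⊤` (no edge) otherwise. -/
noncomputable def wgt (k p : ℕ) (a b : ℕ → Bool) : GV k → GV k → ℝ≥0∞
  | GV.cL, GV.cR => (p : ℝ≥0∞)⁻¹
  | GV.cR, GV.cL => (p : ℝ≥0∞)⁻¹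
  | GV.cL, GV.left _ => 1
  | GV.left _, GV.cL => 1
  | GV.cR, GV.right _ => 1
  | GV.right _, GV.cR => 1
  | GV.left i, GV.right j => if i = j then (p : ℝ≥0∞)⁻¹ else ⊤
  | GV.right i, GV.left j => if i = j then (p : ℝ≥0∞)⁻¹ else ⊤
  | GV.left i, GV.left j =>
      if i ≠ j ∧ (sameSide k i j ∨ inputEdge k a i j) then 1 else ⊤
  | GV.right i, GV.right j =>
      if i ≠ j ∧ (sameSide k i j ∨ inputEdge k b i j) then 1 else ⊤
  | _, _ => ⊤


/-- The potential function used for the lower bound. -/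
noncomputable def pot (k p : ℕ) (ν μ : Fin (2 * k - 1)) : GV k → ℝ≥0∞ := fun x =>
  match x with
  | GV.cL => 1
  | GV.cR => 1 + (p : ℝ≥0∞)⁻¹
  | GV.left j => if j = ν then 0 else if j = μ then 2 else 1
  | GV.right j => if j = ν then (p : ℝ≥0∞)⁻¹ else if j = μ then 2 + (p : ℝ≥0∞)⁻¹
      else 1 + (p : ℝ≥0∞)⁻¹

lemma pathWeight_potential {V : Type*} (w : V → V → ℝ≥0∞) (φ : V → ℝ≥0∞)
    (h : ∀ x y, φ y ≤ φ x + w x y) :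
    ∀ (l : List V) (u v : V), l.head? = some u → l.getLast? = some v →
      φ v ≤ φ u + pathWeight w l
  | [], u, v, hu, _ => by simp at hu
  | [x], u, v, hu, hv => by
      simp only [List.head?, List.getLast?] at hu hv
      obtain rfl : x = u := by injection hu
      obtain rfl : x = v := by injection hv
      simp [pathWeight]
  | x :: y :: rest, u, v, hu, hv => by
      obtain rfl : x = u := by simpa using hu
      have hv' : (y :: rest).getLast? = some v := by
        rwa [List.getLast?_cons_cons] at hv
      have ih := pathWeight_potential w φ h (y :: rest) y v rfl hv'
      calc φ v ≤ φ y + pathWeight w (y :: rest) := ih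
        _ ≤ (φ x + w x y) + pathWeight w (y :: rest) := add_le_add_left (h x y) _
        _ = φ x + pathWeight w (x :: y :: rest) := by
            simp [pathWeight, add_assoc]

lemma wdist_le_path {V : Type*} (w : V → V → ℝ≥0∞) (l : List V) (u v : V)
    (h1 : l.head? = some u) (h2 : l.getLast? = some v) :
    wdist w u v ≤ pathWeight w l :=
  sInf_le ⟨l, h1, h2, rfl⟩

lemma not_edge_aux {k : ℕ} {a : ℕ → Bool} {i : ℕ} {ν μ : Fin (2 * k - 1)}
    (hk : 2 ≤ k) (hik : i < k * k) (ha : a i = true)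
    (hν : ν.1 + 1 = i % k) (hμ : μ.1 + 1 = k + i / k) :
    ¬ (sameSide k ν μ ∨ inputEdge k a ν μ) := by
  have hk0 : 0 < k := by omega
  have hmod : i % k < k := Nat.mod_lt _ hk0
  rintro (h | ⟨m, hm, ham, h⟩)
  · rcases h with ⟨h1, h2⟩ | ⟨h1, h2⟩
    · rw [hμ] at h2
      exact absurd h2 (Nat.not_lt.mpr (Nat.le_add_right _ _))
    · rw [hν] at h1
      exact absurd hmod (Nat.not_lt.mpr h1)
  · have hmmod : m % k < k := Nat.mod_lt _ hk0
    rcases h with ⟨h1, h2⟩ | ⟨h1, h2⟩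
    · have hmk : m % k = i % k := h1 ▸ hν
      have hdk : m / k = i / k := Nat.add_left_cancel (h2 ▸ hμ)
      have : m = i := by
        conv_lhs => rw [← Nat.div_add_mod m k]
        rw [hmk, hdk, Nat.div_add_mod]
      subst this
      rw [ham] at ha; exact Bool.noConfusion ha
    · rw [hμ] at h1
      rw [← h1] at hmmod
      exact absurd hmmod (Nat.not_lt.mpr (Nat.le_add_right _ _))
lemma pot_edge {k p : ℕ} (hp : 1 ≤ p) (a b : ℕ → Bool) {ν μ : Fin (2 * k - 1)}
    (hνμ : ν ≠ μ)
    (hL : ¬ (sameSide k ν μ ∨ inputEdge k a ν μ))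
    (hR : ¬ (sameSide k ν μ ∨ inputEdge k b ν μ)) :
    ∀ x y, pot k p ν μ y ≤ pot k p ν μ x + wgt k p a b x y := by
  have hp1 : (p : ℝ≥0∞)⁻¹ ≤ 1 := by
    simp only [ENNReal.inv_le_one]
    exact_mod_cast hp
  have hμν : ¬ (μ = ν) := fun h => hνμ h.symm
  intro x y
  cases x with
  | cL =>
    cases y with
    | cL => simp [pot, wgt]
    | cR => simp [pot, wgt]
    | left j =>
      simp only [pot, wgt]
      split_ifs <;> norm_num
    | right j => simp [pot, wgt]
  | cR =>
    cases y with
    | cL =>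
      simp only [pot, wgt]
      exact le_add_right le_self_add
    | cR => simp [pot, wgt]
    | left j => simp [pot, wgt]
    | right j =>
      simp only [pot, wgt]
      split_ifs
      · exact le_add_right le_add_self
      · exact le_of_eq (by ring)
      · exact le_self_add
  | left i =>
    cases y with
    | cL =>
      simp only [pot, wgt]
      exact le_add_self
    | cR => simp [pot, wgt]
    | left j =>
      simp only [pot, wgt]
      by_cases hcond : i ≠ j ∧ (sameSide k i j ∨ inputEdge k a i j)
      · rw [if_pos hcond]
        by_cases hjν : j = ν
        · simp [hjν]
        · by_cases hjμ : j = μ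
          · rw [if_neg hjν, if_pos hjμ]
            by_cases hiν : i = ν
            · subst hiν; subst hjμ
              exact absurd hcond.2 hL
            · rw [if_neg hiν]
              by_cases hiμ : i = μ
              · rw [if_pos hiμ]; exact le_self_add
              · rw [if_neg hiμ]; norm_num
          · rw [if_neg hjν, if_neg hjμ]
            exact le_add_self
      · rw [if_neg hcond]; simp
    | right j =>
      simp only [pot, wgt]
      by_cases hij : i = j
      · subst hij
        rw [if_pos rfl]
        by_cases hiν : i = ν
        · simp [hiν]
        · by_cases hiμ : i = μ
          · simp [hiν, hiμ, hμν]
          · simp [hiν, hiμ]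
      · rw [if_neg hij]; simp
  | right i =>
    cases y with
    | cL => simp [pot, wgt]
    | cR =>
      simp only [pot, wgt]
      by_cases hiν : i = ν
      · rw [if_pos hiν]; exact le_of_eq (by ring)
      · rw [if_neg hiν]
        by_cases hiμ : i = μ
        · rw [if_pos hiμ]
          exact le_add_right (add_le_add_left one_le_two _)
        · rw [if_neg hiμ]; exact le_self_add
    | left j =>
      simp only [pot, wgt]
      by_cases hij : i = j
      · subst hij
        rw [if_pos rfl]
        by_cases hiν : i = ν
        · simp [hiν]
        · by_cases hiμ : i = μ
          · simp only [hiμ, hμν, if_neg, if_false]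
            exact le_add_right le_self_add
          · simp [hiν, hiμ]
            exact le_add_right le_self_add
      · rw [if_neg hij]; simp
    | right j =>
      simp only [pot, wgt]
      by_cases hcond : i ≠ j ∧ (sameSide k i j ∨ inputEdge k b i j)
      · rw [if_pos hcond]
        by_cases hjν : j = ν
        · rw [if_pos hjν]
          exact hp1.trans le_add_self
        · by_cases hjμ : j = μ
          · rw [if_neg hjν, if_pos hjμ]
            by_cases hiν : i = ν
            · subst hiν; subst hjμ
              exact absurd hcond.2 hR
            · rw [if_neg hiν]
              by_cases hiμ : i = μ
              · rw [if_pos hiμ]; exact le_self_add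
              · rw [if_neg hiμ]; exact le_of_eq (by ring)
          · rw [if_neg hjν, if_neg hjμ]
            by_cases hiν : i = ν
            · rw [if_pos hiν]; exact le_of_eq (by ring)
            · rw [if_neg hiν]
              by_cases hiμ : i = μ
              · rw [if_pos hiμ]
                exact le_add_right (add_le_add_left one_le_two _)
              · rw [if_neg hiμ]; exact le_self_add
      · rw [if_neg hcond]; simp
lemma upper_bound (k p : ℕ) (hp : 1 ≤ p) (a b : ℕ → Bool) :
    ∀ u v : GV k, wdist (wgt k p a b) u v ≤ 2 + (p : ℝ≥0∞)⁻¹ := by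
  have h1 : (1 : ℝ≥0∞) ≤ 2 + (p : ℝ≥0∞)⁻¹ := le_add_right one_le_two
  have h2 : (p : ℝ≥0∞)⁻¹ ≤ 2 + (p : ℝ≥0∞)⁻¹ := le_add_self
  have h3 : (p : ℝ≥0∞)⁻¹ + 1 ≤ 2 + (p : ℝ≥0∞)⁻¹ := by
    rw [add_comm]; exact add_le_add_left one_le_two _
  have h4 : (1 : ℝ≥0∞) + (p : ℝ≥0∞)⁻¹ ≤ 2 + (p : ℝ≥0∞)⁻¹ :=
    add_le_add_left one_le_two _
  have h5 : (1 : ℝ≥0∞) + 1 ≤ 2 + (p : ℝ≥0∞)⁻¹ := by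
    rw [one_add_one_eq_two]; exact le_self_add
  have h6 : (1 : ℝ≥0∞) + ((p : ℝ≥0∞)⁻¹ + 1) ≤ 2 + (p : ℝ≥0∞)⁻¹ :=
    le_of_eq (by ring)
  intro u v
  cases u with
  | cL =>
    cases v with
    | cL =>
      refine le_trans (wdist_le_path _ [GV.cL] (GV.cL) (GV.cL) (by simp) (by simp)) ?_
      simp [pathWeight]
    | cR =>
      refine le_trans (wdist_le_path _ [GV.cL, GV.cR] (GV.cL) (GV.cR) (by simp) (by simp)) ?_
      simpa [pathWeight, wgt] using h2
    | left j =>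
      refine le_trans (wdist_le_path _ [GV.cL, GV.left j] (GV.cL) (GV.left j) (by simp) (by simp)) ?_
      simpa [pathWeight, wgt] using h1
    | right j =>
      refine le_trans (wdist_le_path _ [GV.cL, GV.cR, GV.right j] (GV.cL) (GV.right j) (by simp) (by simp)) ?_
      simpa [pathWeight, wgt] using h3
  | cR =>
    cases v with
    | cL =>
      refine le_trans (wdist_le_path _ [GV.cR, GV.cL] (GV.cR) (GV.cL) (by simp) (by simp)) ?_
      simpa [pathWeight, wgt] using h2
    | cR =>
      refine le_trans (wdist_le_path _ [GV.cR] (GV.cR) (GV.cR) (by simp) (by simp)) ?_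
      simp [pathWeight]
    | left j =>
      refine le_trans (wdist_le_path _ [GV.cR, GV.cL, GV.left j] (GV.cR) (GV.left j) (by simp) (by simp)) ?_
      simpa [pathWeight, wgt] using h3
    | right j =>
      refine le_trans (wdist_le_path _ [GV.cR, GV.right j] (GV.cR) (GV.right j) (by simp) (by simp)) ?_
      simpa [pathWeight, wgt] using h1
  | left i =>
    cases v with
    | cL =>
      refine le_trans (wdist_le_path _ [GV.left i, GV.cL] (GV.left i) (GV.cL) (by simp) (by simp)) ?_
      simpa [pathWeight, wgt] using h1
    | cR =>
      refine le_trans (wdist_le_path _ [GV.left i, GV.cL, GV.cR] (GV.left i) (GV.cR) (by simp) (by simp)) ?_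
      simpa [pathWeight, wgt] using h4
    | left j =>
      refine le_trans (wdist_le_path _ [GV.left i, GV.cL, GV.left j] (GV.left i) (GV.left j) (by simp) (by simp)) ?_
      simpa [pathWeight, wgt] using h5
    | right j =>
      refine le_trans (wdist_le_path _ [GV.left i, GV.cL, GV.cR, GV.right j] (GV.left i) (GV.right j) (by simp) (by simp)) ?_
      simpa [pathWeight, wgt, add_assoc] using h6
  | right i =>
    cases v with
    | cL =>
      refine le_trans (wdist_le_path _ [GV.right i, GV.cR, GV.cL] (GV.right i) (GV.cL) (by simp) (by simp)) ?_
      simpa [pathWeight, wgt] using h4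
    | cR =>
      refine le_trans (wdist_le_path _ [GV.right i, GV.cR] (GV.right i) (GV.cR) (by simp) (by simp)) ?_
      simpa [pathWeight, wgt] using h1
    | left j =>
      refine le_trans (wdist_le_path _ [GV.right i, GV.cR, GV.cL, GV.left j] (GV.right i) (GV.left j) (by simp) (by simp)) ?_
      simpa [pathWeight, wgt, add_assoc] using h6
    | right j =>
      refine le_trans (wdist_le_path _ [GV.right i, GV.cR, GV.right j] (GV.right i) (GV.right j) (by simp) (by simp)) ?_
      simpa [pathWeight, wgt] using h5
/-- if `a` and `b` are not disjoint, witnessed by index `i` with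
`a i = b i = 1`, then the distance between `l_ν` and `r_μ` (where `ν = i % k` and
`μ = k + ⌊i/k⌋`) is at least `2 + 1/p`, and consequently the weighted diameter of
`G_{a,b}` equals `2 + 1/p`. -/
theorem dist_ge_and_diam_eq_of_not_disjoint (k p : ℕ) (hk : 2 ≤ k) (hp : 1 ≤ p)
    (a b : ℕ → Bool) (i : ℕ) (hik : i < k * k) (ha : a i = true) (hb : b i = true)
    (ν μ : Fin (2 * k - 1)) (hν : ν.1 + 1 = i % k) (hμ : μ.1 + 1 = k + i / k) :
    2 + (p : ℝ≥0∞)⁻¹ ≤ wdist (wgt k p a b) (GV.left ν) (GV.right μ) ∧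
      wdiam (wgt k p a b) = 2 + (p : ℝ≥0∞)⁻¹ := by
  have hk0 : 0 < k := by omega
  have hνμ : ν ≠ μ := by
    intro h
    rw [h, hμ] at hν
    exact absurd (Nat.mod_lt i hk0) (Nat.not_lt.mpr (hν ▸ Nat.le_add_right k (i / k)))
  have hμν : ¬ (μ = ν) := fun h => hνμ h.symm
  have hL := not_edge_aux hk hik ha hν hμ
  have hR := not_edge_aux hk hik hb hν hμ
  have hedge := pot_edge (p := p) hp a b hνμ hL hR
  have lower : 2 + (p : ℝ≥0∞)⁻¹ ≤ wdist (wgt k p a b) (GV.left ν) (GV.right μ) := by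
    apply le_sInf
    rintro c ⟨l, h1, h2, rfl⟩
    have h := pathWeight_potential _ _ hedge l _ _ h1 h2
    simpa [pot, hμν] using h
  refine ⟨lower, le_antisymm ?_ ?_⟩
  · exact iSup_le fun u => iSup_le fun v => upper_bound k p hp a b u v
  · exact lower.trans
      (le_iSup₂ (f := fun u v => wdist (wgt k p a b) u v) (GV.left ν) (GV.right μ))
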